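/- Let (Ω, 𝓕, P) be a probability space, T : Ω → ℝ a random variable, D : Ω → {−1, 1} a random variable, and N_j, N_k : Ω → ℝ random variables with N_j < N_k almost surely; set Δ_j = 1{T ≤ N_j} and Δ_k = 1{T ≤ N_k}. Let E ∈ 𝓕 be an event. Assume (N_j, N_k) is independent of (T, D), E is independent of the σ-algebra generated by (T, D, N_j, N_k), P({N_j = s} ∩ {N_k = s + τ}) > 0, P({N_j = s} ∩ {N_k = s + τ} ∩ E) > 0, and P(s < T ≤ s + τ) > 0, for given s ≥ 0 and τ > 0. Then the true positive rate satisfies P(D = 1 ∣ s < T ≤ s + τ) = P(D = 1, Δ_j = 0, Δ_k = 1, E ∣ N_j = s, N_k = s + τ) / P(Δ_j = 0, Δ_k = 1, E ∣ N_j = s, N_k = s + τ). -/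

import Mathlib

open MeasureTheory ProbabilityTheory
open scoped ENNReal

/-- ratio representation of the true positive rate
`TPR(d_s; s, τ) = P(D = 1 ∣ s < T ≤ s + τ)` from observed adjacent
negative-positive biopsy pairs. -/
theorem tpr_ratio_representation
    {Ω : Type*} [MeasurableSpace Ω] (P : Measure Ω) [IsProbabilityMeasure P]
    (T D Nj Nk : Ω → ℝ)
    (hT : Measurable T) (hD : Measurable D) (hNj : Measurable Nj) (hNk : Measurable Nk)
    (hDval : ∀ ω, D ω = 1 ∨ D ω = -1)
    (hlt : ∀ᵐ ω ∂P, Nj ω < Nk ω)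
    (Δj Δk : Ω → ℝ)
    (hΔj : ∀ ω, Δj ω = if T ω ≤ Nj ω then 1 else 0)
    (hΔk : ∀ ω, Δk ω = if T ω ≤ Nk ω then 1 else 0)
    (E : Set Ω) (hE : MeasurableSet E)
    (s τ : ℝ) (hs : 0 ≤ s) (hτ : 0 < τ)
    (hIndepPair : IndepFun (fun ω => (Nj ω, Nk ω)) (fun ω => (T ω, D ω)) P)
    (hIndepE : Indep
      (MeasurableSpace.comap (fun ω => (T ω, D ω, Nj ω, Nk ω)) inferInstance)
      (MeasurableSpace.generateFrom {E}) P)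
    (hposN : 0 < P ({ω | Nj ω = s} ∩ {ω | Nk ω = s + τ}))
    (hposNE : 0 < P ({ω | Nj ω = s} ∩ {ω | Nk ω = s + τ} ∩ E))
    (hposT : 0 < P {ω | s < T ω ∧ T ω ≤ s + τ}) :
    P ({ω | D ω = 1} ∩ {ω | s < T ω ∧ T ω ≤ s + τ}) / P {ω | s < T ω ∧ T ω ≤ s + τ}
      = (P (({ω | D ω = 1} ∩ {ω | Δj ω = 0} ∩ {ω | Δk ω = 1} ∩ E) ∩
              ({ω | Nj ω = s} ∩ {ω | Nk ω = s + τ})) /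
            P ({ω | Nj ω = s} ∩ {ω | Nk ω = s + τ})) /
        (P (({ω | Δj ω = 0} ∩ {ω | Δk ω = 1} ∩ E) ∩
              ({ω | Nj ω = s} ∩ {ω | Nk ω = s + τ})) /
            P ({ω | Nj ω = s} ∩ {ω | Nk ω = s + τ})) := by
  classical
  set Nset : Set Ω := {ω | Nj ω = s} ∩ {ω | Nk ω = s + τ} with hNset
  set Aset : Set Ω := {ω | s < T ω ∧ T ω ≤ s + τ} with hAset
  set Dset : Set Ω := {ω | D ω = 1} with hDset
  -- pointwise rewriting of the Δ conditions on Nset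
  have heq1 : (Dset ∩ {ω | Δj ω = 0} ∩ {ω | Δk ω = 1} ∩ E) ∩ Nset
      = ((Dset ∩ Aset) ∩ Nset) ∩ E := by
    ext ω
    simp only [Set.mem_inter_iff, Set.mem_setOf_eq, hΔj, hΔk, hNset, hAset, hDset]
    constructor
    · rintro ⟨⟨⟨⟨hd, hj⟩, hk⟩, he⟩, hnj, hnk⟩
      refine ⟨⟨⟨hd, ?_, ?_⟩, hnj, hnk⟩, he⟩
      · by_contra h
        push_neg at h
        rw [if_pos (by rw [hnj]; exact h)] at hj
        norm_num at hj
      · by_cases h : T ω ≤ Nk ω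
        · rw [hnk] at h; exact h
        · rw [if_neg h] at hk; norm_num at hk
    · rintro ⟨⟨⟨hd, hlt', hle⟩, hnj, hnk⟩, he⟩
      refine ⟨⟨⟨⟨hd, ?_⟩, ?_⟩, he⟩, hnj, hnk⟩
      · rw [if_neg (by rw [hnj]; linarith)]
      · rw [if_pos (by rw [hnk]; exact hle)]
  have heq2 : ({ω | Δj ω = 0} ∩ {ω | Δk ω = 1} ∩ E) ∩ Nset
      = (Aset ∩ Nset) ∩ E := by
    ext ω
    simp only [Set.mem_inter_iff, Set.mem_setOf_eq, hΔj, hΔk, hNset, hAset]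
    constructor
    · rintro ⟨⟨⟨hj, hk⟩, he⟩, hnj, hnk⟩
      refine ⟨⟨⟨?_, ?_⟩, hnj, hnk⟩, he⟩
      · by_contra h
        push_neg at h
        rw [if_pos (by rw [hnj]; exact h)] at hj
        norm_num at hj
      · by_cases h : T ω ≤ Nk ω
        · rw [hnk] at h; exact h
        · rw [if_neg h] at hk; norm_num at hk
    · rintro ⟨⟨⟨hlt', hle⟩, hnj, hnk⟩, he⟩
      refine ⟨⟨⟨?_, ?_⟩, he⟩, hnj, hnk⟩
      · rw [if_neg (by rw [hnj]; linarith)]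
      · rw [if_pos (by rw [hnk]; exact hle)]
  -- measurability helpers
  have q1 : Measurable fun p : ℝ × ℝ × ℝ × ℝ => p.1 := measurable_fst
  have q2 : Measurable fun p : ℝ × ℝ × ℝ × ℝ => p.2.1 := measurable_fst.comp measurable_snd
  have q3 : Measurable fun p : ℝ × ℝ × ℝ × ℝ => p.2.2.1 :=
    (measurable_fst.comp measurable_snd).comp measurable_snd
  have q4 : Measurable fun p : ℝ × ℝ × ℝ × ℝ => p.2.2.2 :=
    (measurable_snd.comp measurable_snd).comp measurable_snd
  have r1 : Measurable fun p : ℝ × ℝ => p.1 := measurable_fst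
  have r2 : Measurable fun p : ℝ × ℝ => p.2 := measurable_snd
  have mA : MeasurableSet {p : ℝ × ℝ × ℝ × ℝ | s < p.1 ∧ p.1 ≤ s + τ} :=
    (q1 measurableSet_Ioc : MeasurableSet (_ ⁻¹' Set.Ioc s (s + τ)))
  have mD : MeasurableSet {p : ℝ × ℝ × ℝ × ℝ | p.2.1 = 1} :=
    q2 (measurableSet_singleton 1)
  have mN1 : MeasurableSet {p : ℝ × ℝ × ℝ × ℝ | p.2.2.1 = s} :=
    q3 (measurableSet_singleton s)
  have mN2 : MeasurableSet {p : ℝ × ℝ × ℝ × ℝ | p.2.2.2 = s + τ} :=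
    q4 (measurableSet_singleton (s + τ))
  have mP1 : MeasurableSet {p : ℝ × ℝ | p.1 = s} := r1 (measurableSet_singleton s)
  have mP2 : MeasurableSet {p : ℝ × ℝ | p.2 = s + τ} := r2 (measurableSet_singleton (s + τ))
  have mQA : MeasurableSet {q : ℝ × ℝ | s < q.1 ∧ q.1 ≤ s + τ} :=
    (r1 measurableSet_Ioc : MeasurableSet (_ ⁻¹' Set.Ioc s (s + τ)))
  have mQD : MeasurableSet {q : ℝ × ℝ | q.2 = 1} := r2 (measurableSet_singleton 1)
  -- independence of E from comap-measurable sets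
  have hEmem : MeasurableSet[MeasurableSpace.generateFrom {E}] E :=
    MeasurableSpace.measurableSet_generateFrom rfl
  have hIndE : ∀ (S : Set (ℝ × ℝ × ℝ × ℝ)), MeasurableSet S →
      P ((fun ω => (T ω, D ω, Nj ω, Nk ω)) ⁻¹' S ∩ E)
        = P ((fun ω => (T ω, D ω, Nj ω, Nk ω)) ⁻¹' S) * P E := by
    intro S hS
    exact (hIndepE.indepSet_of_measurableSet ⟨S, hS, rfl⟩ hEmem).measure_inter_eq_mul
  -- P E > 0
  have hNsetE : P (Nset ∩ E) = P Nset * P E := by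
    have hmeas : MeasurableSet ({p : ℝ × ℝ × ℝ × ℝ | p.2.2.1 = s ∧ p.2.2.2 = s + τ}) :=
      mN1.inter mN2
    have h1 := hIndE _ hmeas
    have hpre : (fun ω => (T ω, D ω, Nj ω, Nk ω)) ⁻¹'
        {p : ℝ × ℝ × ℝ × ℝ | p.2.2.1 = s ∧ p.2.2.2 = s + τ} = Nset := by
      ext ω; simp [Nset]
    rw [hpre] at h1
    exact h1
  have hEpos : 0 < P E := by
    by_contra h
    push_neg at h
    have : P E = 0 := le_antisymm h zero_le
    rw [hNsetE, this, mul_zero] at hposNE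
    exact lt_irrefl _ hposNE
  -- key factorizations
  have hfac1 : P (((Dset ∩ Aset) ∩ Nset) ∩ E) = (P (Dset ∩ Aset) * P Nset) * P E := by
    have hmeas : MeasurableSet ({p : ℝ × ℝ × ℝ × ℝ |
        (p.2.1 = 1 ∧ (s < p.1 ∧ p.1 ≤ s + τ)) ∧ p.2.2.1 = s ∧ p.2.2.2 = s + τ}) :=
      (mD.inter mA).inter (mN1.inter mN2)
    have h1 := hIndE _ hmeas
    have hpre : (fun ω => (T ω, D ω, Nj ω, Nk ω)) ⁻¹' {p : ℝ × ℝ × ℝ × ℝ |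
        (p.2.1 = 1 ∧ (s < p.1 ∧ p.1 ≤ s + τ)) ∧ p.2.2.1 = s ∧ p.2.2.2 = s + τ}
        = (Dset ∩ Aset) ∩ Nset := by
      ext ω; simp [Dset, Aset, Nset, Set.mem_inter_iff, and_assoc]
    rw [hpre] at h1
    rw [h1]
    congr 1
    -- P ((Dset ∩ Aset) ∩ Nset) = P (Dset ∩ Aset) * P Nset
    have h2 := hIndepPair.measure_inter_preimage_eq_mul
      ({p : ℝ × ℝ | p.1 = s ∧ p.2 = s + τ})
      ({q : ℝ × ℝ | (s < q.1 ∧ q.1 ≤ s + τ) ∧ q.2 = 1})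
      (mP1.inter mP2) (mQA.inter mQD)
    have hA : (fun ω => (Nj ω, Nk ω)) ⁻¹' {p : ℝ × ℝ | p.1 = s ∧ p.2 = s + τ} = Nset := by
      ext ω; simp [Nset]
    have hB : (fun ω => (T ω, D ω)) ⁻¹' {q : ℝ × ℝ | (s < q.1 ∧ q.1 ≤ s + τ) ∧ q.2 = 1}
        = Aset ∩ Dset := by
      ext ω; simp [Aset, Dset, and_comm]
    rw [hA, hB] at h2
    rw [Set.inter_comm Dset Aset, Set.inter_comm (Aset ∩ Dset) Nset, h2,
      mul_comm]
  have hfac2 : P ((Aset ∩ Nset) ∩ E) = (P Aset * P Nset) * P E := by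
    have hmeas : MeasurableSet ({p : ℝ × ℝ × ℝ × ℝ |
        (s < p.1 ∧ p.1 ≤ s + τ) ∧ p.2.2.1 = s ∧ p.2.2.2 = s + τ}) :=
      mA.inter (mN1.inter mN2)
    have h1 := hIndE _ hmeas
    have hpre : (fun ω => (T ω, D ω, Nj ω, Nk ω)) ⁻¹' {p : ℝ × ℝ × ℝ × ℝ |
        (s < p.1 ∧ p.1 ≤ s + τ) ∧ p.2.2.1 = s ∧ p.2.2.2 = s + τ}
        = Aset ∩ Nset := by
      ext ω; simp [Aset, Nset, Set.mem_inter_iff, and_assoc]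
    rw [hpre] at h1
    rw [h1]
    congr 1
    have h2 := hIndepPair.measure_inter_preimage_eq_mul
      ({p : ℝ × ℝ | p.1 = s ∧ p.2 = s + τ})
      ({q : ℝ × ℝ | s < q.1 ∧ q.1 ≤ s + τ})
      (mP1.inter mP2) mQA
    have hA : (fun ω => (Nj ω, Nk ω)) ⁻¹' {p : ℝ × ℝ | p.1 = s ∧ p.2 = s + τ} = Nset := by
      ext ω; simp [Nset]
    have hB : (fun ω => (T ω, D ω)) ⁻¹' {q : ℝ × ℝ | s < q.1 ∧ q.1 ≤ s + τ} = Aset := by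
      ext ω; simp [Aset]
    rw [hA, hB] at h2
    rw [Set.inter_comm Aset Nset, h2, mul_comm]
  -- finiteness facts
  have hNne : P Nset ≠ 0 := hposN.ne'
  have hNfin : P Nset ≠ ∞ := (measure_lt_top P _).ne
  have hEne : P E ≠ 0 := hEpos.ne'
  have hEfin : P E ≠ ∞ := (measure_lt_top P _).ne
  rw [heq1, heq2, hfac1, hfac2]
  have key : ∀ x : ℝ≥0∞, x * P Nset * P E / P Nset = x * P E := by
    intro x
    rw [mul_comm x (P Nset), mul_assoc, mul_comm (P Nset) _, mul_div_assoc,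
      ENNReal.div_self hNne hNfin, mul_one]
  rw [key, key]
  rw [ENNReal.mul_div_mul_right _ _ hEne hEfin]
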